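/- Let γ be a positive definite density matrix and L an operator such that γ^{1/2} L† γ^{-1/2} = c L† for some nonzero scalar c. Then [ln γ, L† L] = 0 and [ln γ, γ^{-1/2} L γ L† γ^{-1/2}] = 0. -/

import Mathlib

open scoped ComplexOrder
open Matrix BigOperators

lemma commute_log_of_commute_exp {d : ℕ} (Lg X : Matrix (Fin d) (Fin d) ℂ)
    (hLg : Lg.IsHermitian)
    (h : X * NormedSpace.exp Lg = NormedSpace.exp Lg * X) :
    X * Lg = Lg * X := by
  classical
  obtain ⟨U, hU1, hU2, v, hspec⟩ :
      ∃ U : Matrix (Fin d) (Fin d) ℂ, star U * U = 1 ∧ U * star U = 1 ∧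
        ∃ v : Fin d → ℝ, Lg = U * diagonal (Complex.ofReal ∘ v) * star U :=
    ⟨hLg.eigenvectorUnitary, (Matrix.mem_unitaryGroup_iff').mp hLg.eigenvectorUnitary.2,
      (Matrix.mem_unitaryGroup_iff).mp hLg.eigenvectorUnitary.2,
      hLg.eigenvalues, hLg.spectral_theorem⟩
  set u : (Matrix (Fin d) (Fin d) ℂ)ˣ := ⟨U, star U, hU2, hU1⟩ with hudef
  have hexpLg : NormedSpace.exp Lg
      = U * diagonal (fun i => Complex.exp (v i)) * star U := by
    have hconj : NormedSpace.exp (U * diagonal (Complex.ofReal ∘ v) * star U)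
        = U * NormedSpace.exp (diagonal (Complex.ofReal ∘ v)) * star U :=
      Matrix.exp_units_conj u (diagonal (Complex.ofReal ∘ v))
    have hD : NormedSpace.exp (diagonal (Complex.ofReal ∘ v))
        = diagonal (fun i => Complex.exp (v i)) := by
      rw [Matrix.exp_diagonal]
      congr 1
      funext i
      rw [Pi.exp_def]
      simp [Complex.exp_eq_exp_ℂ]
    rw [hspec, hconj, hD]
  have cancel : ∀ A B : Matrix (Fin d) (Fin d) ℂ,
      U * A * star U = U * B * star U → A = B := by
    intro A B hAB
    calc A = (star U * U) * A * (star U * U) := by rw [hU1]; simp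
      _ = star U * (U * A * star U) * U := by noncomm_ring
      _ = star U * (U * B * star U) * U := by rw [hAB]
      _ = (star U * U) * B * (star U * U) := by noncomm_ring
      _ = B := by rw [hU1]; simp
  set Y : Matrix (Fin d) (Fin d) ℂ := star U * X * U with hYdef
  have hXY : X = U * Y * star U := by
    rw [hYdef, show U * (star U * X * U) * star U = (U * star U) * X * (U * star U) by
      noncomm_ring, hU2, one_mul, mul_one]
  have hYcomm : Y * diagonal (fun i => Complex.exp (v i))
      = diagonal (fun i => Complex.exp (v i)) * Y := by
    apply cancel
    calc U * (Y * diagonal (fun i => Complex.exp (v i))) * star U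
        = (U * Y * star U) * (U * diagonal (fun i => Complex.exp (v i)) * star U) := by
          rw [show (U * Y * star U) * (U * diagonal (fun i => Complex.exp (v i)) * star U)
            = U * (Y * (star U * U) * diagonal (fun i => Complex.exp (v i))) * star U by
            noncomm_ring, hU1]; noncomm_ring
      _ = (U * diagonal (fun i => Complex.exp (v i)) * star U) * (U * Y * star U) := by
          rw [← hXY, ← hexpLg]; exact h
      _ = U * (diagonal (fun i => Complex.exp (v i)) * Y) * star U := by
          rw [show (U * diagonal (fun i => Complex.exp (v i)) * star U) * (U * Y * star U)
            = U * (diagonal (fun i => Complex.exp (v i)) * (star U * U) * Y) * star U by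
            noncomm_ring, hU1]; noncomm_ring
  have hYD : Y * diagonal (Complex.ofReal ∘ v) = diagonal (Complex.ofReal ∘ v) * Y := by
    ext i j
    rw [Matrix.mul_diagonal, Matrix.diagonal_mul]
    have hthis := congrFun (congrFun hYcomm i) j
    rw [Matrix.mul_diagonal, Matrix.diagonal_mul] at hthis
    rcases eq_or_ne (Y i j) 0 with h0 | h0
    · rw [h0]; ring
    · have hexpeq : Complex.exp (v j) = Complex.exp (v i) :=
        mul_left_cancel₀ h0 (hthis.trans (mul_comm _ _))
      have hre : Real.exp (v j) = Real.exp (v i) := by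
        have h6 : (Real.exp (v j) : ℂ) = (Real.exp (v i) : ℂ) := by
          rw [Complex.ofReal_exp, Complex.ofReal_exp]; exact hexpeq
        exact_mod_cast h6
      have hv : v j = v i := Real.exp_injective hre
      simp only [Function.comp_apply]
      rw [hv]; ring
  calc X * Lg = (U * Y * star U) * (U * diagonal (Complex.ofReal ∘ v) * star U) := by
        rw [← hXY, ← hspec]
    _ = U * (Y * diagonal (Complex.ofReal ∘ v)) * star U := by
        rw [show (U * Y * star U) * (U * diagonal (Complex.ofReal ∘ v) * star U)
          = U * (Y * (star U * U) * diagonal (Complex.ofReal ∘ v)) * star U by noncomm_ring, hU1]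
        noncomm_ring
    _ = U * (diagonal (Complex.ofReal ∘ v) * Y) * star U := by rw [hYD]
    _ = (U * diagonal (Complex.ofReal ∘ v) * star U) * (U * Y * star U) := by
        rw [show (U * diagonal (Complex.ofReal ∘ v) * star U) * (U * Y * star U)
          = U * (diagonal (Complex.ofReal ∘ v) * (star U * U) * Y) * star U by noncomm_ring, hU1]
        noncomm_ring
    _ = Lg * X := by rw [← hXY, ← hspec]

lemma trace_conj_mul_self_eq_zero {d : ℕ} (L : Matrix (Fin d) (Fin d) ℂ)
    (h : Matrix.trace (Lᴴ * L) = 0) : L = 0 := by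
  classical
  have key : Matrix.trace (Lᴴ * L) = ((∑ j, ∑ i, Complex.normSq (L i j) : ℝ) : ℂ) := by
    simp only [Matrix.trace, Matrix.diag, Matrix.mul_apply, Matrix.conjTranspose_apply]
    push_cast
    refine Finset.sum_congr rfl fun j _ => Finset.sum_congr rfl fun i _ => ?_
    rw [Complex.normSq_eq_conj_mul_self]
    rfl
  rw [key] at h
  have h0 : (∑ j, ∑ i, Complex.normSq (L i j) : ℝ) = 0 := by exact_mod_cast h
  have hnn : ∀ j ∈ Finset.univ, (0:ℝ) ≤ ∑ i, Complex.normSq (L i j) := fun j _ =>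
    Finset.sum_nonneg fun i _ => Complex.normSq_nonneg _
  ext i j
  have hj := (Finset.sum_eq_zero_iff_of_nonneg hnn).mp h0 j (Finset.mem_univ j)
  have hi := (Finset.sum_eq_zero_iff_of_nonneg
    (fun i _ => Complex.normSq_nonneg (L i j))).mp hj i (Finset.mem_univ i)
  simpa using Complex.normSq_eq_zero.mp hi

/-- If conjugation by `γ^{1/2}` acts on `L†` as multiplication by a nonzero scalar `c`,
then `ln γ` commutes with `L†L` and with `γ^{-1/2} L γ L† γ^{-1/2}`.  Here `s` is the
positive square root of `γ` and `Lg` is the Hermitian logarithm of `γ`, characterized by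
`exp Lg = γ`. -/
theorem logGamma_commutators {d : ℕ}
    (γ L Lg s : Matrix (Fin d) (Fin d) ℂ)
    (hγ : γ.PosDef)
    (hLg : Lg.IsHermitian) (hexp : NormedSpace.exp Lg = γ)
    (hs : s.PosDef) (hss : s * s = γ)
    (c : ℂ) (hc : c ≠ 0)
    (hconj : s * Lᴴ * s⁻¹ = c • Lᴴ) :
    Lg * (Lᴴ * L) = (Lᴴ * L) * Lg ∧
    Lg * (s⁻¹ * (L * γ * Lᴴ) * s⁻¹) = (s⁻¹ * (L * γ * Lᴴ) * s⁻¹) * Lg := by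
  classical
  by_cases hL : L = 0
  · subst hL; simp
  have hdet : IsUnit s.det := (Matrix.isUnit_iff_isUnit_det s).mp hs.isUnit
  have hsi : s⁻¹ * s = 1 := Matrix.nonsing_inv_mul s hdet
  have his : s * s⁻¹ = 1 := Matrix.mul_nonsing_inv s hdet
  have hsH : sᴴ = s := hs.isHermitian
  have h1 : s * Lᴴ = c • (Lᴴ * s) := by
    have h := congrArg (fun M => M * s) hconj
    rw [mul_assoc, hsi, mul_one, Matrix.smul_mul] at h
    exact h
  have h2 : L * s = (starRingEnd ℂ c) • (s * L) := by
    have h := congrArg Matrix.conjTranspose h1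
    simp only [Matrix.conjTranspose_mul, Matrix.conjTranspose_conjTranspose,
      Matrix.conjTranspose_smul, hsH] at h
    exact h
  have hcbar : (starRingEnd ℂ) c ≠ 0 := by
    simpa using star_ne_zero.mpr hc
  have h3 : s * L = ((starRingEnd ℂ c)⁻¹) • (L * s) := by
    rw [h2, smul_smul, inv_mul_cancel₀ hcbar, one_smul]
  set A := Lᴴ * L with hA
  have h4 : s * A = (c * (starRingEnd ℂ c)⁻¹) • (A * s) := by
    calc s * A = (s * Lᴴ) * L := by rw [hA, mul_assoc]
      _ = c • (Lᴴ * (s * L)) := by rw [h1, Matrix.smul_mul, mul_assoc]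
      _ = c • (Lᴴ * (((starRingEnd ℂ c)⁻¹) • (L * s))) := by rw [h3]
      _ = (c * (starRingEnd ℂ c)⁻¹) • (A * s) := by
          rw [mul_smul_comm, smul_smul, hA, mul_assoc]
  have htrace : Matrix.trace A = (c * (starRingEnd ℂ c)⁻¹) * Matrix.trace A := by
    have h5 : s * A * s⁻¹ = (c * (starRingEnd ℂ c)⁻¹) • (A * (s * s⁻¹)) := by
      rw [h4, Matrix.smul_mul, mul_assoc, mul_assoc]
    rw [his, mul_one] at h5
    have h6 := congrArg Matrix.trace h5
    rwa [Matrix.trace_smul, Matrix.trace_mul_cycle, ← mul_assoc, hsi, one_mul,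
      smul_eq_mul] at h6
  have htA : Matrix.trace A ≠ 0 := fun ht => hL (trace_conj_mul_self_eq_zero L ht)
  have hcc : c * (starRingEnd ℂ c)⁻¹ = 1 := by
    have h7 : (c * (starRingEnd ℂ c)⁻¹) * Matrix.trace A = 1 * Matrix.trace A := by
      rw [one_mul, ← htrace]
    exact mul_right_cancel₀ htA h7
  have hcs : (starRingEnd ℂ) c = c := by
    field_simp at hcc
    exact hcc.symm
  rw [hcs] at h3
  have hsA : s * A = A * s := by rw [h4, hcs, mul_inv_cancel₀ hc, one_smul]
  have hsγ : s * γ = γ * s := by rw [← hss, mul_assoc]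
  have hAγ : A * γ = γ * A := by
    rw [← hss]
    calc A * (s * s) = (A * s) * s := (mul_assoc A s s).symm
      _ = (s * A) * s := by rw [hsA]
      _ = s * (A * s) := mul_assoc s A s
      _ = s * (s * A) := by rw [hsA]
      _ = (s * s) * A := (mul_assoc s s A).symm
  constructor
  · exact (commute_log_of_commute_exp Lg A hLg (by rw [hexp]; exact hAγ)).symm
  · set M := L * γ * Lᴴ with hM
    have hsM : s * M = M * s := by
      calc s * M = (s * L) * γ * Lᴴ := by rw [hM, ← mul_assoc, ← mul_assoc]
        _ = c⁻¹ • (L * (s * γ) * Lᴴ) := by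
            rw [h3, Matrix.smul_mul, Matrix.smul_mul, mul_assoc L s γ]
        _ = c⁻¹ • (L * γ * (s * Lᴴ)) := by rw [hsγ, ← mul_assoc, mul_assoc (L*γ) s Lᴴ]
        _ = (c⁻¹ * c) • (M * s) := by
            rw [h1, mul_smul_comm, smul_smul, hM]
            simp only [mul_assoc]
        _ = M * s := by rw [inv_mul_cancel₀ hc, one_smul]
    have hsiM : s⁻¹ * M = M * s⁻¹ := by
      calc s⁻¹ * M = s⁻¹ * M * (s * s⁻¹) := by rw [his, mul_one]
        _ = s⁻¹ * (M * s) * s⁻¹ := by simp only [mul_assoc]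
        _ = s⁻¹ * (s * M) * s⁻¹ := by rw [hsM]
        _ = (s⁻¹ * s) * (M * s⁻¹) := by simp only [mul_assoc]
        _ = M * s⁻¹ := by rw [hsi, one_mul]
    have hBγ : (s⁻¹ * M * s⁻¹) * γ = γ * (s⁻¹ * M * s⁻¹) := by
      have hB1 : (s⁻¹ * M * s⁻¹) * γ = M := by
        rw [← hss]
        calc s⁻¹ * M * s⁻¹ * (s * s) = s⁻¹ * M * ((s⁻¹ * s) * s) := by simp only [mul_assoc]
          _ = s⁻¹ * (M * s) := by rw [hsi, one_mul]; simp only [mul_assoc]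
          _ = s⁻¹ * (s * M) := by rw [hsM]
          _ = M := by rw [← mul_assoc, hsi, one_mul]
      have hB2 : γ * (s⁻¹ * M * s⁻¹) = M := by
        rw [← hss]
        calc s * s * (s⁻¹ * M * s⁻¹) = s * ((s * s⁻¹) * (M * s⁻¹)) := by simp only [mul_assoc]
          _ = s * (s⁻¹ * M) := by rw [his, one_mul, hsiM]
          _ = M := by rw [← mul_assoc, his, one_mul]
      rw [hB1, hB2]
    exact (commute_log_of_commute_exp Lg (s⁻¹ * M * s⁻¹) hLg (by rw [hexp]; exact hBγ)).symm
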